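/- Let ρ(x) = (−7 − 9^x + 4^{x+1}) / (2(4 − 4^x)) for x ∈ (0,1). Then ρ is a bijection from the open interval (0,1) onto the open interval (−2/3, −2 + (9/8)·(ln 9 / ln 4)). -/

import Mathlib

open Real Set Filter Topology

private lemma expD (a : ℝ) (ha : 0 < a) (x : ℝ) :
    HasDerivAt (fun y : ℝ => a ^ y) (a ^ x * Real.log a) x :=
  (Real.hasStrictDerivAt_const_rpow ha x).hasDerivAt

private lemma Mpos {u : ℝ} (hu : 0 < u) :
    0 < Real.log 4 * ((9:ℝ) ^ u - 1) - Real.log 9 * ((4:ℝ) ^ u - 1) := by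
  set M : ℝ → ℝ := fun u => Real.log 4 * ((9:ℝ) ^ u - 1) - Real.log 9 * ((4:ℝ) ^ u - 1) with hM
  have hd : ∀ t : ℝ, HasDerivAt M
      (Real.log 4 * ((9:ℝ) ^ t * Real.log 9) - Real.log 9 * ((4:ℝ) ^ t * Real.log 4)) t := by
    intro t
    exact (((expD 9 (by norm_num) t).sub_const 1).const_mul _).sub
      (((expD 4 (by norm_num) t).sub_const 1).const_mul _)
  have hmono : StrictMonoOn M (Ici (0:ℝ)) := by
    apply strictMonoOn_of_deriv_pos (convex_Ici 0)
    · exact fun t _ => ((hd t).continuousAt).continuousWithinAt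
    · intro t ht
      rw [interior_Ici] at ht
      rw [(hd t).deriv]
      have h49 : (4:ℝ) ^ t < (9:ℝ) ^ t := Real.rpow_lt_rpow (by norm_num) (by norm_num) ht
      have l4 : 0 < Real.log 4 := Real.log_pos (by norm_num)
      have l9 : 0 < Real.log 9 := Real.log_pos (by norm_num)
      have he : Real.log 4 * ((9:ℝ) ^ t * Real.log 9) - Real.log 9 * ((4:ℝ) ^ t * Real.log 4)
          = Real.log 4 * Real.log 9 * ((9:ℝ) ^ t - (4:ℝ) ^ t) := by ring
      rw [he]
      exact mul_pos (mul_pos l4 l9) (by linarith)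
  have h0 : M 0 = 0 := by simp [hM]
  have := hmono (le_refl (0:ℝ)) (le_of_lt hu) hu
  rw [h0] at this
  exact this

theorem rho_bijOn :
    Set.BijOn (fun y : ℝ => (-7 - (9 : ℝ) ^ y + (4 : ℝ) ^ (y + 1)) / (2 * (4 - (4 : ℝ) ^ y)))
      (Set.Ioo (0 : ℝ) 1)
      (Set.Ioo (-2 / 3 : ℝ) (-2 + 9 / 8 * (Real.log 9 / Real.log 4))) := by
  set f : ℝ → ℝ := fun y => (-7 - (9 : ℝ) ^ y + (4 : ℝ) ^ (y + 1)) / (2 * (4 - (4 : ℝ) ^ y))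
    with hf
  set B : ℝ := -2 + 9 / 8 * (Real.log 9 / Real.log 4) with hB
  have l4 : 0 < Real.log 4 := Real.log_pos (by norm_num)
  have l9 : 0 < Real.log 9 := Real.log_pos (by norm_num)
  have h9p : ∀ x : ℝ, 0 < (9:ℝ) ^ x := fun x => Real.rpow_pos_of_pos (by norm_num) x
  have h4p : ∀ x : ℝ, 0 < (4:ℝ) ^ x := fun x => Real.rpow_pos_of_pos (by norm_num) x
  have h4lt : ∀ x : ℝ, x < 1 → (4:ℝ) ^ x < 4 := by
    intro x hx
    have := Real.rpow_lt_rpow_of_exponent_lt (by norm_num : (1:ℝ) < 4) hx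
    rwa [Real.rpow_one] at this
  -- derivative of f on (0,1)
  have hshift : ∀ x : ℝ, (4:ℝ) ^ (x + 1) = 4 * (4:ℝ) ^ x := by
    intro x
    rw [Real.rpow_add (by norm_num), Real.rpow_one]; ring
  have hder : ∀ x ∈ Ioo (0:ℝ) 1, HasDerivAt f
      (((-((9:ℝ) ^ x * Real.log 9) + (4:ℝ) ^ (x+1) * Real.log 4) * (2 * (4 - (4:ℝ) ^ x)) -
        (-7 - (9:ℝ) ^ x + (4:ℝ) ^ (x+1)) * (2 * (0 - (4:ℝ) ^ x * Real.log 4))) /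
        (2 * (4 - (4:ℝ) ^ x)) ^ 2) x := by
    intro x hx
    have hne : 2 * (4 - (4:ℝ) ^ x) ≠ 0 := by
      have := h4lt x hx.2; nlinarith
    have hnum : HasDerivAt (fun y : ℝ => -7 - (9:ℝ) ^ y + (4:ℝ) ^ (y + 1))
        (-((9:ℝ) ^ x * Real.log 9) + (4:ℝ) ^ (x+1) * Real.log 4) x := by
      have h1 : HasDerivAt (fun y : ℝ => (4:ℝ) ^ (y + 1)) ((4:ℝ) ^ (x+1) * Real.log 4) x := by
        have := (expD 4 (by norm_num) (x+1)).comp x ((hasDerivAt_id x).add_const 1)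
        simpa [Function.comp_def] using this
      have h2 := ((hasDerivAt_const x (-7:ℝ)).sub (expD 9 (by norm_num) x)).add h1
      exact h2.congr_deriv (by ring)
    have hden : HasDerivAt (fun y : ℝ => 2 * (4 - (4:ℝ) ^ y))
        (2 * (0 - (4:ℝ) ^ x * Real.log 4)) x :=
      ((hasDerivAt_const x (4:ℝ)).sub (expD 4 (by norm_num) x)).const_mul 2
    exact hnum.div hden hne
  have hderpos : ∀ x ∈ Ioo (0:ℝ) 1,
      0 < (((-((9:ℝ) ^ x * Real.log 9) + (4:ℝ) ^ (x+1) * Real.log 4) * (2 * (4 - (4:ℝ) ^ x)) -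
        (-7 - (9:ℝ) ^ x + (4:ℝ) ^ (x+1)) * (2 * (0 - (4:ℝ) ^ x * Real.log 4))) /
        (2 * (4 - (4:ℝ) ^ x)) ^ 2) := by
    intro x hx
    have hb4 : (4:ℝ) ^ x < 4 := h4lt x hx.2
    apply div_pos
    · have hM := Mpos (u := 1 - x) (by linarith [hx.2])
      have e9 : (9:ℝ) ^ (1 - x) = 9 / (9:ℝ) ^ x := by
        rw [Real.rpow_sub (by norm_num), Real.rpow_one]
      have e4 : (4:ℝ) ^ (1 - x) = 4 / (4:ℝ) ^ x := by
        rw [Real.rpow_sub (by norm_num), Real.rpow_one]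
      rw [e9, e4] at hM
      have ha := h9p x
      have hbp := h4p x
      have hMab := mul_pos (mul_pos ha hbp) hM
      have heq : (9:ℝ) ^ x * (4:ℝ) ^ x *
          (Real.log 4 * (9 / (9:ℝ) ^ x - 1) - Real.log 9 * (4 / (4:ℝ) ^ x - 1)) =
          Real.log 4 * ((4:ℝ) ^ x * 9 - (9:ℝ) ^ x * (4:ℝ) ^ x) -
          Real.log 9 * ((9:ℝ) ^ x * 4 - (9:ℝ) ^ x * (4:ℝ) ^ x) := by
        field_simp
      rw [heq] at hMab
      have hE : ((-((9:ℝ) ^ x * Real.log 9) + (4:ℝ) ^ (x+1) * Real.log 4) * (2 * (4 - (4:ℝ) ^ x)) -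
          (-7 - (9:ℝ) ^ x + (4:ℝ) ^ (x+1)) * (2 * (0 - (4:ℝ) ^ x * Real.log 4))) =
          2 * (Real.log 4 * ((4:ℝ) ^ x * 9 - (9:ℝ) ^ x * (4:ℝ) ^ x) -
          Real.log 9 * ((9:ℝ) ^ x * 4 - (9:ℝ) ^ x * (4:ℝ) ^ x)) := by
        rw [hshift x]; ring
      rw [hE]; linarith
    · have : 0 < 2 * (4 - (4:ℝ) ^ x) := by linarith
      positivity
  -- continuity on Ico 0 1
  have hcont : ContinuousOn f (Ico (0:ℝ) 1) := by
    apply ContinuousOn.div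
    · apply Continuous.continuousOn
      have c9 : Continuous fun y : ℝ => (9:ℝ) ^ y :=
        continuous_iff_continuousAt.2 fun x => (expD 9 (by norm_num) x).continuousAt
      have c4 : Continuous fun y : ℝ => (4:ℝ) ^ (y + 1) := by
        have c4' : Continuous fun y : ℝ => (4:ℝ) ^ y :=
          continuous_iff_continuousAt.2 fun x => (expD 4 (by norm_num) x).continuousAt
        exact c4'.comp (continuous_id.add continuous_const)
      exact (continuous_const.sub c9).add c4
    · apply Continuous.continuousOn
      have c4' : Continuous fun y : ℝ => (4:ℝ) ^ y :=
        continuous_iff_continuousAt.2 fun x => (expD 4 (by norm_num) x).continuousAt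
      exact continuous_const.mul (continuous_const.sub c4')
    · intro x hx
      have := h4lt x hx.2; nlinarith
  -- strict monotonicity on Ico 0 1
  have hmono : StrictMonoOn f (Ico (0:ℝ) 1) := by
    apply strictMonoOn_of_deriv_pos (convex_Ico 0 1) hcont
    intro x hx
    rw [interior_Ico] at hx
    rw [(hder x hx).deriv]
    exact hderpos x hx
  have hf0 : f 0 = -2 / 3 := by
    simp only [hf]
    rw [Real.rpow_zero, zero_add, Real.rpow_one, Real.rpow_zero]
    norm_num
  -- limit at 1 from the left
  have htend : Tendsto f (𝓝[<] (1:ℝ)) (𝓝 B) := by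
    have t9 : Tendsto (slope (fun y : ℝ => (9:ℝ) ^ y) 1) (𝓝[≠] (1:ℝ))
        (𝓝 ((9:ℝ) ^ (1:ℝ) * Real.log 9)) :=
      hasDerivAt_iff_tendsto_slope.1 (expD 9 (by norm_num) 1)
    have t4 : Tendsto (slope (fun y : ℝ => (4:ℝ) ^ y) 1) (𝓝[≠] (1:ℝ))
        (𝓝 ((4:ℝ) ^ (1:ℝ) * Real.log 4)) :=
      hasDerivAt_iff_tendsto_slope.1 (expD 4 (by norm_num) 1)
    simp only [Real.rpow_one] at t9 t4
    have hne : (4:ℝ) * Real.log 4 ≠ 0 := by positivity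
    have tdiv := Filter.Tendsto.div t9 t4 hne
    have tg : Tendsto (fun y => -2 + 1/2 * (slope (fun y : ℝ => (9:ℝ) ^ y) 1 y /
        slope (fun y : ℝ => (4:ℝ) ^ y) 1 y)) (𝓝[≠] (1:ℝ))
        (𝓝 (-2 + 1/2 * ((9:ℝ) * Real.log 9 / ((4:ℝ) * Real.log 4)))) :=
      (tdiv.const_mul (1/2)).const_add (-2)
    have hBval : -2 + 1/2 * ((9:ℝ) * Real.log 9 / ((4:ℝ) * Real.log 4)) = B := by
      rw [hB]
      field_simp
      ring
    rw [hBval] at tg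
    have tg' := tg.mono_left (nhdsWithin_mono 1 (fun y (hy : y < 1) => ne_of_lt hy))
    apply tg'.congr'
    filter_upwards [self_mem_nhdsWithin] with y (hy : y < 1)
    have hy1 : y - 1 ≠ 0 := by linarith
    have hb : (4:ℝ) ^ y - 4 ≠ 0 := by have := h4lt y hy; linarith
    rw [slope_def_field, slope_def_field, hf]
    simp only
    rw [hshift y, Real.rpow_one, Real.rpow_one]
    have hden : 2 * (4 - (4:ℝ) ^ y) ≠ 0 := by
      have := h4lt y hy; nlinarith
    have hden' : (4:ℝ) - (4:ℝ) ^ y ≠ 0 := by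
      have := h4lt y hy; linarith
    field_simp
    ring
  -- f x < B for x in Ico 0 1
  have hltB : ∀ x ∈ Ico (0:ℝ) 1, f x < B := by
    intro x hx
    set z := (x + 1) / 2 with hz
    have hxz : x < z := by rw [hz]; linarith [hx.2]
    have hz1 : z < 1 := by rw [hz]; linarith [hx.2]
    have hz0 : 0 ≤ z := by rw [hz]; linarith [hx.1]
    have h1 : f x < f z := hmono hx ⟨hz0, hz1⟩ hxz
    have h2 : f z ≤ B := by
      apply ge_of_tendsto htend
      filter_upwards [Ioo_mem_nhdsLT_of_mem (⟨hz1, le_refl 1⟩ : (1:ℝ) ∈ Ioc z 1)] with y hy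
      exact le_of_lt (hmono ⟨hz0, hz1⟩ ⟨le_trans hz0 (le_of_lt hy.1), hy.2⟩ hy.1)
    linarith
  constructor
  · -- MapsTo
    intro x hx
    refine ⟨?_, hltB x ⟨le_of_lt hx.1, hx.2⟩⟩
    have := hmono ⟨le_refl 0, by norm_num⟩ ⟨le_of_lt hx.1, hx.2⟩ hx.1
    rw [hf0] at this
    exact this
  constructor
  · -- InjOn
    exact (hmono.injOn).mono Set.Ioo_subset_Ico_self
  · -- SurjOn
    intro v hv
    obtain ⟨hv1, hv2⟩ := hv
    have hEv : ∀ᶠ y in 𝓝[<] (1:ℝ), v < f y := htend.eventually (eventually_gt_nhds hv2)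
    have hEv2 : ∀ᶠ y in 𝓝[<] (1:ℝ), y ∈ Ioo (0:ℝ) 1 :=
      Ioo_mem_nhdsLT_of_mem (⟨zero_lt_one, le_refl 1⟩ : (1:ℝ) ∈ Ioc 0 1)
    obtain ⟨x₀, hvx₀, hx₀⟩ := (hEv.and hEv2).exists
    have hmem : v ∈ Ioo (f 0) (f x₀) := by
      rw [hf0]; exact ⟨hv1, hvx₀⟩
    have hsub := intermediate_value_Ioo (le_of_lt hx₀.1)
      (hcont.mono (Set.Icc_subset_Ico_right hx₀.2))
    have := hsub hmem
    exact Set.image_mono (Set.Ioo_subset_Ioo_right (le_of_lt hx₀.2)) this
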